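/- Let p be a prime, let M, M̃ ∈ M_n(ℤ) be expanding matrices and D, D̃ ⊂ ℤ^n finite digit sets, and let A, B ∈ M_n(ℤ) have determinants not divisible by p with AB ≡ I (mod p), M̃ = AMB and D = B D̃. If Z_{D̃}^n ⊆ E̊_p^n, then there exists an integer j ≥ 1 with (M^t)^j Z_D^n ∩ ℤ^n ≠ ∅ if and only if there exists an integer j̃ ≥ 1 with (M̃^t)^{j̃} Z_{D̃}^n ∩ ℤ^n ≠ ∅. -/

import Mathlib

open MeasureTheory Matrix Set Complex
open scoped Real Pointwise ENNReal

noncomputable section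

namespace SA

variable {n : ℕ}

/-- Cast an integer matrix to a real matrix. -/
def toR (M : Matrix (Fin n) (Fin n) ℤ) : Matrix (Fin n) (Fin n) ℝ :=
  M.map (Int.cast : ℤ → ℝ)

/-- Cast an integer vector to a real vector. -/
def vecR (d : Fin n → ℤ) : Fin n → ℝ := fun i => (d i : ℝ)

/-- A real matrix is expanding if all of its complex eigenvalues have modulus > 1. -/
def IsExpandingR (M : Matrix (Fin n) (Fin n) ℝ) : Prop :=
  ∀ z : ℂ, (M.map (Complex.ofReal)).charpoly.IsRoot z → 1 < ‖z‖

/-- An integer matrix is expanding if all of its complex eigenvalues have modulus > 1. -/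
def IsExpanding (M : Matrix (Fin n) (Fin n) ℤ) : Prop :=
  IsExpandingR (toR M)

/-- Standard inner product on `ℝ^n`. -/
def dotR (x y : Fin n → ℝ) : ℝ := ∑ i, x i * y i

/-- The exponential function `e_λ(x) = e^{2πi⟨λ,x⟩}`. -/
def expFun (lam : Fin n → ℝ) : (Fin n → ℝ) → ℂ :=
  fun x => Complex.exp (2 * Real.pi * Complex.I * (dotR lam x))

/-- Mask polynomial of a finite real digit set. -/
def maskR (D : Finset (Fin n → ℝ)) (x : Fin n → ℝ) : ℂ :=
  (D.card : ℂ)⁻¹ * ∑ d ∈ D, Complex.exp (2 * Real.pi * Complex.I * (dotR d x))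

/-- Zero set of the mask polynomial of a real digit set. -/
def maskZR (D : Finset (Fin n → ℝ)) : Set (Fin n → ℝ) := {x | maskR D x = 0}

/-- Mask polynomial of a finite integer digit set. -/
def mask (D : Finset (Fin n → ℤ)) (x : Fin n → ℝ) : ℂ :=
  (D.card : ℂ)⁻¹ * ∑ d ∈ D, Complex.exp (2 * Real.pi * Complex.I * (dotR (vecR d) x))

/-- Zero set `Z(m_D)` of the mask polynomial of an integer digit set. -/
def maskZ (D : Finset (Fin n → ℤ)) : Set (Fin n → ℝ) := {x | mask D x = 0}

/-- `Z_D^n := Z(m_D) ∩ [0,1)^n`. -/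
def ZDn (D : Finset (Fin n → ℤ)) : Set (Fin n → ℝ) :=
  maskZ D ∩ {x | ∀ i, 0 ≤ x i ∧ x i < 1}

/-- `E̊_p^n := (1/p){(l₁,…,l_n) : 0 ≤ lᵢ ≤ p-1} \ {0}`. -/
def Ering (p n : ℕ) : Set (Fin n → ℝ) :=
  {x | (∃ l : Fin n → ℕ, (∀ i, l i ≤ p - 1) ∧ ∀ i, x i = (l i : ℝ) / p) ∧ x ≠ 0}

/-- The integer lattice `ℤ^n` inside `ℝ^n`. -/
def latticeZ (n : ℕ) : Set (Fin n → ℝ) := {x | ∀ i, ∃ k : ℤ, x i = (k : ℝ)}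

/-- `μ` is the self-affine measure generated by the real expanding matrix `M`
and the real digit set `D`: it is a Borel probability measure satisfying
`μ = (1/|D|) ∑_{d∈D} μ ∘ φ_d⁻¹` with `φ_d(x) = M⁻¹(x+d)`. -/
def IsSelfAffineR (M : Matrix (Fin n) (Fin n) ℝ) (D : Finset (Fin n → ℝ))
    (μ : Measure (Fin n → ℝ)) : Prop :=
  IsProbabilityMeasure μ ∧
    μ = (D.card : ℝ≥0∞)⁻¹ • ∑ d ∈ D, μ.map (fun x => M⁻¹.mulVec (x + d))

/-- `μ` is the self-affine measure generated by the integer expanding matrix `M`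
and the integer digit set `D`. -/
def IsSelfAffine (M : Matrix (Fin n) (Fin n) ℤ) (D : Finset (Fin n → ℤ))
    (μ : Measure (Fin n → ℝ)) : Prop :=
  IsProbabilityMeasure μ ∧
    μ = (D.card : ℝ≥0∞)⁻¹ • ∑ d ∈ D, μ.map (fun x => (toR M)⁻¹.mulVec (x + vecR d))

/-- Fourier transform `μ̂(ξ) = ∫ e^{2πi⟨x,ξ⟩} dμ(x)`. -/
def FT (μ : Measure (Fin n → ℝ)) (ξ : Fin n → ℝ) : ℂ :=
  ∫ x, Complex.exp (2 * Real.pi * Complex.I * (dotR x ξ)) ∂μ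

/-- The family of exponentials `E(Λ)` is mutually orthogonal in `L²(μ)`:
`μ̂(λ - λ') = 0` for all distinct `λ, λ' ∈ Λ`. -/
def OrthExp (μ : Measure (Fin n → ℝ)) (Λ : Set (Fin n → ℝ)) : Prop :=
  ∀ a ∈ Λ, ∀ b ∈ Λ, a ≠ b → FT μ (a - b) = 0

/-- `Λ` is a spectrum of `μ`: the exponentials `{e^{2πi⟨λ,x⟩} : λ ∈ Λ}` form an
orthonormal (Hilbert) basis of `L²(μ)`. -/
def IsSpectrum (μ : Measure (Fin n → ℝ)) (Λ : Set (Fin n → ℝ)) : Prop :=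
  ∃ b : HilbertBasis Λ ℂ (Lp ℂ 2 μ), ∀ l : Λ, (b l : Lp ℂ 2 μ) =ᵐ[μ] expFun (l : Fin n → ℝ)

/-- `μ` is a spectral measure. -/
def IsSpectralMeasure (μ : Measure (Fin n → ℝ)) : Prop :=
  ∃ Λ : Set (Fin n → ℝ), Λ.Countable ∧ IsSpectrum μ Λ

/-- `(M, D)` is admissible: there is `S ⊂ ℤ^n` with `|S| = |D|` such that
`H = (1/√|S|)[e^{2πi⟨M⁻¹d,s⟩}]_{d∈D,s∈S}` satisfies `H^*H = I`. -/
def Admissible (M : Matrix (Fin n) (Fin n) ℤ) (D : Finset (Fin n → ℤ)) : Prop :=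
  ∃ S : Finset (Fin n → ℤ), S.card = D.card ∧
    letI H : Matrix {d // d ∈ D} {s // s ∈ S} ℂ := fun d s =>
      ((1 : ℂ) / (Real.sqrt S.card : ℂ)) *
        Complex.exp (2 * Real.pi * Complex.I *
          (dotR ((toR M)⁻¹.mulVec (vecR (d : Fin n → ℤ))) (vecR (s : Fin n → ℤ))))
    Hᴴ * H = 1

/-- Two matrices are congruent entrywise modulo `p`. -/
def ModEq (p : ℕ) (A B : Matrix (Fin n) (Fin n) ℤ) : Prop :=
  ∀ i j, (p : ℤ) ∣ (A i j - B i j)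

/-- `(M, D)` and `(M̃, D̃)` are conjugate in `GL_n(p)`: there are integer matrices
`A, B` with determinants prime to `p`, `AB ≡ I (mod p)`, `M̃ = AMB`, and either
`D = B D̃` or `D̃ = A D`. -/
def ConjugateGL (p : ℕ) (M Mt : Matrix (Fin n) (Fin n) ℤ)
    (D Dt : Finset (Fin n → ℤ)) : Prop :=
  ∃ A B : Matrix (Fin n) (Fin n) ℤ,
    ¬ (p : ℤ) ∣ A.det ∧ ¬ (p : ℤ) ∣ B.det ∧ ModEq p (A * B) 1 ∧ Mt = A * M * B ∧
      ((∀ d, d ∈ D ↔ ∃ dt ∈ Dt, d = B.mulVec dt) ∨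
       (∀ dt, dt ∈ Dt ↔ ∃ d ∈ D, dt = A.mulVec d))


-- Auxiliary lemmas


def lat (x : Fin n → ℝ) : Prop := ∀ i, ∃ k : ℤ, x i = (k : ℝ)

def pint (p : ℕ) (x : Fin n → ℝ) : Prop := ∀ i, ∃ k : ℤ, (p : ℝ) * x i = (k : ℝ)

lemma lat_mem {x : Fin n → ℝ} (h : lat x) : x ∈ latticeZ n := h

lemma lat_of_mem {x : Fin n → ℝ} (h : x ∈ latticeZ n) : lat x := h

lemma lat_add {x y : Fin n → ℝ} (hx : lat x) (hy : lat y) : lat (x + y) := by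
  intro i
  obtain ⟨a, ha⟩ := hx i; obtain ⟨b, hb⟩ := hy i
  exact ⟨a + b, by simp [ha, hb]⟩

lemma lat_sub {x y : Fin n → ℝ} (hx : lat x) (hy : lat y) : lat (x - y) := by
  intro i
  obtain ⟨a, ha⟩ := hx i; obtain ⟨b, hb⟩ := hy i
  exact ⟨a - b, by simp [ha, hb]⟩

lemma lat_neg {x : Fin n → ℝ} (hx : lat x) : lat (-x) := by
  intro i
  obtain ⟨a, ha⟩ := hx i
  exact ⟨-a, by simp [ha]⟩

lemma lat_mulVec (Q : Matrix (Fin n) (Fin n) ℤ) {x : Fin n → ℝ} (hx : lat x) :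
    lat ((toR Q).mulVec x) := by
  choose k hk using hx
  intro i
  refine ⟨∑ j, Q i j * k j, ?_⟩
  simp only [Matrix.mulVec, dotProduct, toR, Matrix.map_apply]
  push_cast
  exact Finset.sum_congr rfl fun j _ => by rw [hk j]

lemma pint_mulVec {p : ℕ} (Q : Matrix (Fin n) (Fin n) ℤ) {x : Fin n → ℝ} (hx : pint p x) :
    pint p ((toR Q).mulVec x) := by
  choose k hk using hx
  intro i
  refine ⟨∑ j, Q i j * k j, ?_⟩
  simp only [Matrix.mulVec, dotProduct, toR, Matrix.map_apply]
  rw [Finset.mul_sum]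
  push_cast
  exact Finset.sum_congr rfl fun j _ => by rw [← hk j]; ring

lemma pint_of_sub_lat {p : ℕ} {y w : Fin n → ℝ} (hy : pint p y) (h : lat (w - y)) :
    pint p w := by
  intro i
  obtain ⟨a, ha⟩ := hy i
  obtain ⟨b, hb⟩ := h i
  refine ⟨a + p * b, ?_⟩
  have hb' : w i - y i = (b : ℝ) := hb
  push_cast
  nlinarith [ha, hb']

lemma lat_int_mul (c : ℤ) {x : Fin n → ℝ} (hx : lat x) : lat (fun i => (c : ℝ) * x i) := by
  intro i
  obtain ⟨a, ha⟩ := hx i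
  exact ⟨c * a, by show (c:ℝ) * x i = _; rw [ha]; push_cast; ring⟩

lemma modp_sub {p : ℕ} (Q : Matrix (Fin n) (Fin n) ℤ) (hQ : ModEq p Q 1)
    {x : Fin n → ℝ} (hx : pint p x) : lat ((toR Q).mulVec x - x) := by
  choose c hc using fun i j => hQ i j
  choose k hk using hx
  intro i
  refine ⟨∑ j, c i j * k j, ?_⟩
  have h1 : x i = ∑ j, (((1 : Matrix (Fin n) (Fin n) ℤ) i j : ℝ)) * x j := by
    simp [Matrix.one_apply, apply_ite, ite_mul, Finset.sum_ite_eq]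
  have : ((toR Q).mulVec x - x) i = ∑ j, ((Q i j : ℝ) * x j - ((1 : Matrix (Fin n) (Fin n) ℤ) i j : ℝ) * x j) := by
    simp only [Pi.sub_apply, Matrix.mulVec, dotProduct, toR, Matrix.map_apply]
    rw [Finset.sum_sub_distrib, ← h1]
  rw [this]
  push_cast
  refine Finset.sum_congr rfl fun j _ => ?_
  have hcast : (Q i j : ℝ) - ((1 : Matrix (Fin n) (Fin n) ℤ) i j : ℝ) = (p : ℝ) * (c i j : ℝ) := by
    exact_mod_cast congrArg (Int.cast : ℤ → ℝ) (hc i j)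
  have hkj := hk j
  linear_combination x j * hcast + (c i j : ℝ) * hkj

def fr (x : Fin n → ℝ) : Fin n → ℝ := fun i => Int.fract (x i)

lemma lat_sub_fr (x : Fin n → ℝ) : lat (x - fr x) := by
  intro i
  exact ⟨⌊x i⌋, by show x i - Int.fract (x i) = _; rw [Int.self_sub_fract]⟩

lemma pint_of_Ering {p : ℕ} (hp : 0 < p) {x : Fin n → ℝ} (hx : x ∈ Ering p n) : pint p x := by
  obtain ⟨⟨l, _, hxl⟩, _⟩ := hx
  intro i
  refine ⟨l i, ?_⟩
  rw [hxl i]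
  field_simp
  simp

lemma toR_mul (P Q : Matrix (Fin n) (Fin n) ℤ) : toR (P * Q) = toR P * toR Q :=
  Matrix.map_mul (f := Int.castRingHom ℝ)

lemma toR_transpose (P : Matrix (Fin n) (Fin n) ℤ) : toR (Pᵀ) = (toR P)ᵀ := rfl

lemma toR_pow (P : Matrix (Fin n) (Fin n) ℤ) (k : ℕ) : toR (P ^ k) = toR P ^ k := by
  induction k with
  | zero => simp [toR]
  | succ k ih => rw [pow_succ, pow_succ, toR_mul, ih]

lemma app_mul (P Q : Matrix (Fin n) (Fin n) ℤ) (v : Fin n → ℝ) :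
    (toR (P * Q)).mulVec v = (toR P).mulVec ((toR Q).mulVec v) := by
  rw [toR_mul, Matrix.mulVec_mulVec]

lemma mulVec_const_mul (Q : Matrix (Fin n) (Fin n) ℝ) (c : ℝ) (x : Fin n → ℝ) :
    Q.mulVec (fun i => c * x i) = fun i => c * Q.mulVec x i := by
  funext i
  simp only [Matrix.mulVec, dotProduct, Finset.mul_sum]
  exact Finset.sum_congr rfl fun j _ => by ring

lemma modEq_iff_cast {p : ℕ} {X Y : Matrix (Fin n) (Fin n) ℤ} :
    ModEq p X Y ↔ X.map (Int.cast : ℤ → ZMod p) = Y.map (Int.cast : ℤ → ZMod p) := by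
  constructor
  · intro h
    ext i j
    simp only [Matrix.map_apply]
    rw [ZMod.intCast_eq_intCast_iff]
    exact (Int.modEq_iff_dvd.mpr (h i j)).symm
  · intro h i j
    have := congrFun (congrFun h i) j
    simp only [Matrix.map_apply] at this
    have h2 : X i j ≡ Y i j [ZMOD (p : ℕ)] := (ZMod.intCast_eq_intCast_iff _ _ _).mp this
    exact dvd_sub_comm.mp (Int.ModEq.dvd h2)

lemma modEq_comm {p : ℕ} {A B : Matrix (Fin n) (Fin n) ℤ} (h : ModEq p (A * B) 1) :
    ModEq p (B * A) 1 := by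
  rw [modEq_iff_cast] at h ⊢
  have hmul : ∀ X Y : Matrix (Fin n) (Fin n) ℤ,
      (X * Y).map (Int.cast : ℤ → ZMod p) = X.map (Int.cast : ℤ → ZMod p) * Y.map (Int.cast : ℤ → ZMod p) :=
    fun X Y => Matrix.map_mul (f := Int.castRingHom (ZMod p))
  have hone : (1 : Matrix (Fin n) (Fin n) ℤ).map (Int.cast : ℤ → ZMod p) = 1 := by
    ext i j
    by_cases hij : i = j <;> simp [Matrix.map_apply, Matrix.one_apply, hij]
  rw [hmul, hone] at h ⊢
  exact mul_eq_one_comm.mp h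

lemma modEq_transpose {p : ℕ} {X : Matrix (Fin n) (Fin n) ℤ} (h : ModEq p X 1) :
    ModEq p Xᵀ 1 := by
  intro i j
  have := h j i
  simp only [Matrix.transpose_apply]
  simpa [Matrix.one_apply, eq_comm] using this

lemma mask_congr (D : Finset (Fin n → ℤ)) {x y : Fin n → ℝ} (h : lat (x - y)) :
    mask D x = mask D y := by
  choose k hk using h
  unfold mask
  congr 1
  refine Finset.sum_congr rfl fun d _ => ?_
  have hdot : dotR (vecR d) x = dotR (vecR d) y + ((∑ i, d i * k i : ℤ) : ℝ) := by
    simp only [dotR, vecR]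
    push_cast
    rw [← Finset.sum_add_distrib]
    refine Finset.sum_congr rfl fun i _ => ?_
    have hxi : x i = y i + (k i : ℝ) := by
      have : x i - y i = (k i : ℝ) := hk i
      linarith
    rw [hxi]; ring
  rw [hdot]
  push_cast
  rw [mul_add, Complex.exp_add]
  have h1 : Complex.exp (2 * (Real.pi : ℂ) * Complex.I * (∑ i, (d i : ℂ) * (k i : ℂ))) = 1 := by
    have := Complex.exp_int_mul_two_pi_mul_I (∑ i, d i * k i)
    rw [← this]
    congr 1
    push_cast
    ring
  rw [h1, mul_one]

lemma dot_mulVec (B : Matrix (Fin n) (Fin n) ℤ) (d : Fin n → ℤ) (x : Fin n → ℝ) :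
    dotR (vecR (B.mulVec d)) x = dotR (vecR d) ((toR Bᵀ).mulVec x) := by
  simp only [dotR, vecR, toR, Matrix.mulVec, dotProduct, Matrix.transpose_apply,
    Matrix.map_apply]
  push_cast
  simp only [Finset.sum_mul, Finset.mul_sum]
  rw [Finset.sum_comm]
  exact Finset.sum_congr rfl fun i _ => Finset.sum_congr rfl fun j _ => by ring

lemma mask_transform (B : Matrix (Fin n) (Fin n) ℤ) (hB : B.det ≠ 0)
    (D Dt : Finset (Fin n → ℤ)) (hDeq : ∀ d, d ∈ D ↔ ∃ dt ∈ Dt, d = B.mulVec dt)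
    (x : Fin n → ℝ) : mask D x = mask Dt ((toR Bᵀ).mulVec x) := by
  have hinj : Function.Injective (B.mulVec : (Fin n → ℤ) → (Fin n → ℤ)) := by
    intro a b hab
    have h1 : (B.adjugate * B).mulVec a = (B.adjugate * B).mulVec b := by
      rw [← Matrix.mulVec_mulVec, ← Matrix.mulVec_mulVec, hab]
    simp only [Matrix.adjugate_mul, Matrix.smul_mulVec, Matrix.one_mulVec] at h1
    funext i
    have h2 := congrFun h1 i
    simp only [Pi.smul_apply, smul_eq_mul] at h2
    exact mul_left_cancel₀ hB h2
  have hD : D = Dt.image (fun dt => B.mulVec dt) := by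
    ext d
    simp only [Finset.mem_image]
    rw [hDeq d]
    constructor
    · rintro ⟨dt, h1, h2⟩; exact ⟨dt, h1, h2.symm⟩
    · rintro ⟨dt, h1, h2⟩; exact ⟨dt, h1, h2.symm⟩
  rw [hD]
  unfold mask
  rw [Finset.card_image_of_injective _ hinj, Finset.sum_image (fun a _ b _ h => hinj h)]
  congr 1
  exact Finset.sum_congr rfl fun dt _ => by rw [dot_mulVec]


lemma ind_forward {p : ℕ} (M A B : Matrix (Fin n) (Fin n) ℤ)
    (hE : ModEq p (Aᵀ * Bᵀ) 1) {u : Fin n → ℝ} (hu : pint p u) (k : ℕ) :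
    lat ((toR (((A*M*B)ᵀ)^k * Bᵀ)).mulVec u - (toR (Bᵀ * Mᵀ^k)).mulVec u) := by
  induction k with
  | zero =>
    simp only [pow_zero, one_mul, mul_one]
    intro i
    exact ⟨0, by simp⟩
  | succ k ih =>
    set T : Matrix (Fin n) (Fin n) ℤ := (A*M*B)ᵀ with hT
    have hTsplit : T = Bᵀ * (Mᵀ * Aᵀ) := by
      rw [hT, Matrix.transpose_mul, Matrix.transpose_mul]
    have hv : pint p ((toR (Mᵀ^k)).mulVec u) := pint_mulVec _ hu
    have h1 : lat ((toR (Aᵀ*Bᵀ)).mulVec ((toR (Mᵀ^k)).mulVec u) - (toR (Mᵀ^k)).mulVec u) :=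
      modp_sub _ hE hv
    have h2 : lat ((toR (Bᵀ*Mᵀ)).mulVec
        ((toR (Aᵀ*Bᵀ)).mulVec ((toR (Mᵀ^k)).mulVec u) - (toR (Mᵀ^k)).mulVec u)) :=
      lat_mulVec _ h1
    have h3 : lat ((toR T).mulVec
        ((toR (T^k*Bᵀ)).mulVec u - (toR (Bᵀ*Mᵀ^k)).mulVec u)) := lat_mulVec _ ih
    have e1 : (toR (T^(k+1)*Bᵀ)).mulVec u = (toR T).mulVec ((toR (T^k*Bᵀ)).mulVec u) := by
      rw [← app_mul, ← mul_assoc, ← pow_succ']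
    have e2 : (toR T).mulVec ((toR (Bᵀ*Mᵀ^k)).mulVec u)
        = (toR (Bᵀ*Mᵀ)).mulVec ((toR (Aᵀ*Bᵀ)).mulVec ((toR (Mᵀ^k)).mulVec u)) := by
      rw [← app_mul, ← app_mul, ← app_mul]
      congr 1
      rw [hTsplit]
      simp only [mul_assoc]
    have e3 : (toR (Bᵀ*Mᵀ)).mulVec ((toR (Mᵀ^k)).mulVec u)
        = (toR (Bᵀ*Mᵀ^(k+1))).mulVec u := by
      rw [← app_mul, mul_assoc, ← pow_succ']
    have key : (toR (T^(k+1)*Bᵀ)).mulVec u - (toR (Bᵀ*Mᵀ^(k+1))).mulVec u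
        = (toR T).mulVec ((toR (T^k*Bᵀ)).mulVec u - (toR (Bᵀ*Mᵀ^k)).mulVec u)
          + (toR (Bᵀ*Mᵀ)).mulVec
            ((toR (Aᵀ*Bᵀ)).mulVec ((toR (Mᵀ^k)).mulVec u) - (toR (Mᵀ^k)).mulVec u) := by
      rw [Matrix.mulVec_sub, Matrix.mulVec_sub, e1, ← e3, e2]
      abel
    rw [key]
    exact lat_add h3 h2

lemma ind_backward {p : ℕ} (M A B : Matrix (Fin n) (Fin n) ℤ)
    (hE : ModEq p (Aᵀ * Bᵀ) 1) {y : Fin n → ℝ} (hy : pint p y) (k : ℕ) :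
    lat ((toR (Mᵀ^k * Aᵀ)).mulVec y - (toR (Aᵀ * ((A*M*B)ᵀ)^k)).mulVec y) := by
  induction k with
  | zero =>
    simp only [pow_zero, one_mul, mul_one]
    intro i
    exact ⟨0, by simp⟩
  | succ k ih =>
    set T : Matrix (Fin n) (Fin n) ℤ := (A*M*B)ᵀ with hT
    have hTsplit : T = Bᵀ * (Mᵀ * Aᵀ) := by
      rw [hT, Matrix.transpose_mul, Matrix.transpose_mul]
    have hv : pint p ((toR (T^k)).mulVec y) := pint_mulVec _ hy
    have hw : pint p ((toR (Mᵀ*Aᵀ)).mulVec ((toR (T^k)).mulVec y)) := pint_mulVec _ hv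
    have h1 : lat ((toR (Aᵀ*Bᵀ)).mulVec ((toR (Mᵀ*Aᵀ)).mulVec ((toR (T^k)).mulVec y))
        - (toR (Mᵀ*Aᵀ)).mulVec ((toR (T^k)).mulVec y)) := modp_sub _ hE hw
    have h3 : lat ((toR Mᵀ).mulVec
        ((toR (Mᵀ^k*Aᵀ)).mulVec y - (toR (Aᵀ*T^k)).mulVec y)) := lat_mulVec _ ih
    have e1 : (toR (Mᵀ^(k+1)*Aᵀ)).mulVec y = (toR Mᵀ).mulVec ((toR (Mᵀ^k*Aᵀ)).mulVec y) := by
      rw [← app_mul, ← mul_assoc, ← pow_succ']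
    have e2 : (toR Mᵀ).mulVec ((toR (Aᵀ*T^k)).mulVec y)
        = (toR (Mᵀ*Aᵀ)).mulVec ((toR (T^k)).mulVec y) := by
      rw [← app_mul, ← app_mul, mul_assoc]
    have e3 : (toR (Aᵀ*T^(k+1))).mulVec y
        = (toR (Aᵀ*Bᵀ)).mulVec ((toR (Mᵀ*Aᵀ)).mulVec ((toR (T^k)).mulVec y)) := by
      rw [← app_mul, ← app_mul]
      congr 1
      rw [pow_succ']
      rw [hTsplit]
      simp only [mul_assoc]
    have key : (toR (Mᵀ^(k+1)*Aᵀ)).mulVec y - (toR (Aᵀ*T^(k+1))).mulVec y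
        = (toR Mᵀ).mulVec ((toR (Mᵀ^k*Aᵀ)).mulVec y - (toR (Aᵀ*T^k)).mulVec y)
          - ((toR (Aᵀ*Bᵀ)).mulVec ((toR (Mᵀ*Aᵀ)).mulVec ((toR (T^k)).mulVec y))
             - (toR (Mᵀ*Aᵀ)).mulVec ((toR (T^k)).mulVec y)) := by
      rw [Matrix.mulVec_sub, e1, e2, e3]
      abel
    rw [key]
    exact lat_sub h3 h1


lemma smul_one_mulVec (c : ℤ) (x : Fin n → ℝ) :
    (toR (c • (1 : Matrix (Fin n) (Fin n) ℤ))).mulVec x = fun i => (c:ℝ) * x i := by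
  funext i
  have h1 : ∀ j, (toR (c • (1 : Matrix (Fin n) (Fin n) ℤ))) i j = if i = j then (c:ℝ) else 0 := by
    intro j
    simp only [toR, Matrix.map_apply, Matrix.smul_apply, Matrix.one_apply, smul_eq_mul]
    by_cases h : i = j <;> simp [h]
  simp only [Matrix.mulVec, dotProduct, h1, ite_mul, zero_mul]
  simp [Finset.sum_ite_eq]

/-- `(M^t)^j Z_D^n` meets `ℤ^n` for some `j ≥ 1` iff
`(M̃^t)^{j̃} Z_{D̃}^n` meets `ℤ^n` for some `j̃ ≥ 1`. -/
theorem hits_lattice_iff {n : ℕ} {p : ℕ} (hp : p.Prime)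
    (M Mt : Matrix (Fin n) (Fin n) ℤ) (hM : IsExpanding M) (hMt : IsExpanding Mt)
    (D Dt : Finset (Fin n → ℤ)) (A B : Matrix (Fin n) (Fin n) ℤ)
    (hA : ¬ (p : ℤ) ∣ A.det) (hB : ¬ (p : ℤ) ∣ B.det)
    (hAB : ModEq p (A * B) 1) (hMteq : Mt = A * M * B)
    (hDeq : ∀ d, d ∈ D ↔ ∃ dt ∈ Dt, d = B.mulVec dt)
    (hZ : ZDn Dt ⊆ Ering p n) :
    (∃ j : ℕ, 1 ≤ j ∧ ∃ x ∈ ZDn D, ((toR M)ᵀ ^ j).mulVec x ∈ latticeZ n) ↔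
      (∃ j : ℕ, 1 ≤ j ∧ ∃ y ∈ ZDn Dt, ((toR Mt)ᵀ ^ j).mulVec y ∈ latticeZ n) := by
  have hE : ModEq p (Aᵀ * Bᵀ) 1 := by
    have h1 : ModEq p (B * A) 1 := modEq_comm hAB
    have h2 := modEq_transpose h1
    rwa [Matrix.transpose_mul] at h2
  have hABt : ModEq p ((A*B)ᵀ) 1 := modEq_transpose hAB
  have hBdet : B.det ≠ 0 := fun h => hB (h ▸ dvd_zero _)
  have hppos : 0 < p := hp.pos
  constructor
  · rintro ⟨j, hj, x, hxmem, hxlat⟩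
    obtain ⟨hxz, hxbox⟩ := hxmem
    have hmx : mask D x = 0 := hxz
    have hxlat' : lat ((toR (Mᵀ^j)).mulVec x) := by
      have h0 : ((toR M)ᵀ ^ j) = toR (Mᵀ^j) := by rw [toR_pow, toR_transpose]
      have := lat_of_mem hxlat
      rwa [h0] at this
    set y : Fin n → ℝ := fr ((toR Bᵀ).mulVec x) with hy
    have hfr : lat ((toR Bᵀ).mulVec x - y) := lat_sub_fr _
    have hmy : mask Dt y = 0 := by
      have h1 := mask_transform B hBdet D Dt hDeq x
      have h2 : mask Dt ((toR Bᵀ).mulVec x) = mask Dt y := mask_congr Dt hfr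
      rw [← h2, ← h1]
      exact hmx
    have hymem : y ∈ ZDn Dt := ⟨hmy, fun i => ⟨Int.fract_nonneg _, Int.fract_lt_one _⟩⟩
    have hpy : pint p y := pint_of_Ering hppos (hZ hymem)
    have hpBx : pint p ((toR Bᵀ).mulVec x) := pint_of_sub_lat hpy hfr
    have hq0 : pint p ((toR (Bᵀ.adjugate)).mulVec ((toR Bᵀ).mulVec x)) := pint_mulVec _ hpBx
    have hdetx : (toR (Bᵀ.adjugate)).mulVec ((toR Bᵀ).mulVec x) = fun i => (B.det : ℝ) * x i := by
      rw [← app_mul, Matrix.adjugate_mul, Matrix.det_transpose, smul_one_mulVec]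
    have hq : pint p (fun i => (B.det : ℝ) * x i) := by rw [← hdetx]; exact hq0
    have hcop : IsCoprime (p : ℤ) B.det :=
      (Prime.coprime_iff_not_dvd (Nat.prime_iff_prime_int.mp hp)).mpr hB
    obtain ⟨s, t, hst⟩ := hcop
    set u : Fin n → ℝ := fun i => ((t * B.det : ℤ) : ℝ) * x i with hu
    have hpu : pint p u := by
      intro i
      obtain ⟨a, ha⟩ := hq i
      refine ⟨t * a, ?_⟩
      show (p:ℝ) * (((t * B.det : ℤ):ℝ) * x i) = ((t*a : ℤ) : ℝ)
      simp only [Int.cast_mul]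
      linear_combination (t : ℝ) * ha
    have hbu : lat ((toR Bᵀ).mulVec u - y) := by
      choose ky hky using hpy
      choose kd hkd using hfr
      intro i
      refine ⟨-s * ky i + t * B.det * kd i, ?_⟩
      have h1 : ((toR Bᵀ).mulVec u) i = ((t * B.det : ℤ):ℝ) * ((toR Bᵀ).mulVec x) i := by
        rw [hu, mulVec_const_mul]
      have hkdi : ((toR Bᵀ).mulVec x) i - y i = (kd i : ℝ) := hkd i
      have hkyi : (p:ℝ) * y i = (ky i : ℝ) := hky i
      have hst' : (s:ℝ) * (p:ℝ) + (t:ℝ) * (B.det:ℝ) = 1 := by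
        exact_mod_cast congrArg (Int.cast : ℤ → ℝ) hst
      show ((toR Bᵀ).mulVec u) i - y i = _
      rw [h1]
      simp only [Int.cast_mul, Int.cast_add, Int.cast_neg]
      linear_combination ((t:ℝ) * (B.det:ℝ)) * hkdi - (s:ℝ) * hkyi + (y i) * hst'
    refine ⟨j, hj, y, hymem, ?_⟩
    have hgoal : lat ((toR (((A*M*B)ᵀ)^j)).mulVec y) := by
      have hind := ind_forward M A B hE hpu j
      have hMju : lat ((toR (Mᵀ^j)).mulVec u) := by
        have heq : (toR (Mᵀ^j)).mulVec u = fun i => ((t*B.det : ℤ):ℝ) * ((toR (Mᵀ^j)).mulVec x) i := by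
          rw [hu, mulVec_const_mul]
        rw [heq]
        exact lat_int_mul (t*B.det) hxlat'
      have hterm2 : lat ((toR Bᵀ).mulVec ((toR (Mᵀ^j)).mulVec u)) := lat_mulVec _ hMju
      have hterm3 : lat ((toR (((A*M*B)ᵀ)^j)).mulVec ((toR Bᵀ).mulVec u - y)) := lat_mulVec _ hbu
      have key : (toR (((A*M*B)ᵀ)^j)).mulVec y
          = ((toR (((A*M*B)ᵀ)^j * Bᵀ)).mulVec u - (toR (Bᵀ * Mᵀ^j)).mulVec u)
            + (toR Bᵀ).mulVec ((toR (Mᵀ^j)).mulVec u)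
            - (toR (((A*M*B)ᵀ)^j)).mulVec ((toR Bᵀ).mulVec u - y) := by
        rw [Matrix.mulVec_sub, app_mul, app_mul]
        abel
      rw [key]
      exact lat_sub (lat_add hind hterm2) hterm3
    have hconv : ((toR Mt)ᵀ ^ j) = toR (((A*M*B)ᵀ)^j) := by
      rw [hMteq, toR_pow, toR_transpose]
    rw [hconv]
    exact lat_mem hgoal
  · rintro ⟨j, hj, y, hymem, hylat⟩
    obtain ⟨hyz, hybox⟩ := hymem
    have hmy : mask Dt y = 0 := hyz
    have hpy : pint p y := pint_of_Ering hppos (hZ ⟨hyz, hybox⟩)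
    have hylat' : lat ((toR (((A*M*B)ᵀ)^j)).mulVec y) := by
      have hconv : ((toR Mt)ᵀ ^ j) = toR (((A*M*B)ᵀ)^j) := by
        rw [hMteq, toR_pow, toR_transpose]
      have := lat_of_mem hylat
      rwa [hconv] at this
    set x : Fin n → ℝ := fr ((toR Aᵀ).mulVec y) with hx
    have hfr : lat ((toR Aᵀ).mulVec y - x) := lat_sub_fr _
    have hmx : mask D x = 0 := by
      have h1 := mask_transform B hBdet D Dt hDeq x
      have h2 : mask Dt ((toR Bᵀ).mulVec x) = mask Dt ((toR Bᵀ).mulVec ((toR Aᵀ).mulVec y)) := by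
        refine mask_congr Dt ?_
        have heq : (toR Bᵀ).mulVec x - (toR Bᵀ).mulVec ((toR Aᵀ).mulVec y)
            = (toR Bᵀ).mulVec (-(((toR Aᵀ).mulVec y) - x)) := by
          rw [← Matrix.mulVec_sub, neg_sub]
        rw [heq]
        exact lat_mulVec _ (lat_neg hfr)
      have h3 : mask Dt ((toR Bᵀ).mulVec ((toR Aᵀ).mulVec y)) = mask Dt y := by
        refine mask_congr Dt ?_
        have heq : (toR Bᵀ).mulVec ((toR Aᵀ).mulVec y) = (toR ((A*B)ᵀ)).mulVec y := by
          rw [Matrix.transpose_mul, app_mul]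
        rw [heq]
        exact modp_sub _ hABt hpy
      rw [h1, h2, h3, hmy]
    refine ⟨j, hj, x, ⟨hmx, fun i => ⟨Int.fract_nonneg _, Int.fract_lt_one _⟩⟩, ?_⟩
    have hgoal : lat ((toR (Mᵀ^j)).mulVec x) := by
      have hind := ind_backward M A B hE hpy j
      have hterm1 : lat ((toR Aᵀ).mulVec ((toR (((A*M*B)ᵀ)^j)).mulVec y)) := lat_mulVec _ hylat'
      have hterm2 : lat ((toR (Mᵀ^j)).mulVec ((toR Aᵀ).mulVec y - x)) := lat_mulVec _ hfr
      have key : (toR (Mᵀ^j)).mulVec x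
          = ((toR (Mᵀ^j * Aᵀ)).mulVec y - (toR (Aᵀ * ((A*M*B)ᵀ)^j)).mulVec y)
            + (toR Aᵀ).mulVec ((toR (((A*M*B)ᵀ)^j)).mulVec y)
            - (toR (Mᵀ^j)).mulVec ((toR Aᵀ).mulVec y - x) := by
        rw [Matrix.mulVec_sub, app_mul, app_mul]
        abel
      rw [key]
      exact lat_sub (lat_add hind hterm1) hterm2
    have hconv : ((toR M)ᵀ ^ j) = toR (Mᵀ^j) := by rw [toR_pow, toR_transpose]
    rw [hconv]
    exact lat_mem hgoal


end SA
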